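/- Extrema of the four-state clock model fixed points at criticality (equations (107)–(108)): for t > 0 define h₀(t) = (e^{t}+1)²/(4(1+sinh t)²), h₁(t) = sinh(t)/(2(1+sinh t)²), and h₂(t) = (e^{−t}−1)²/(4(1+sinh t)²), and let t_c = ln(1+√2). Then for every t > 0: h₀(t) ≥ (3+2√2)/8, h₁(t) ≤ 1/8, and h₂(t) ≤ (3−2√2)/8, with equality at t = t_c: h₀(t_c) = (3+2√2)/8, h₁(t_c) = 1/8, h₂(t_c) = (3−2√2)/8. -/

import Mathlib

/-- The clock-model fixed point `π*(0) = (e^t+1)²/(4(1+sinh t)²)`. -/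
noncomputable def clockH0 (t : ℝ) : ℝ :=
  (Real.exp t + 1) ^ 2 / (4 * (1 + Real.sinh t) ^ 2)

/-- The clock-model fixed point `π*(1) = π*(3) = sinh(t)/(2(1+sinh t)²)`. -/
noncomputable def clockH1 (t : ℝ) : ℝ :=
  Real.sinh t / (2 * (1 + Real.sinh t) ^ 2)

/-- The clock-model fixed point `π*(2) = (e^{−t}−1)²/(4(1+sinh t)²)`. -/
noncomputable def clockH2 (t : ℝ) : ℝ :=
  (Real.exp (-t) - 1) ^ 2 / (4 * (1 + Real.sinh t) ^ 2)

/-- Extrema of the four-state clock model fixed points at the critical coupling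
`t_c = ln(1+√2)`: on `t > 0`, `h₀(t) ≥ (3+2√2)/8`, `h₁(t) ≤ 1/8`, `h₂(t) ≤ (3−2√2)/8`,
with equality at `t_c`. -/
theorem clock_fixed_point_extrema :
    (∀ t : ℝ, 0 < t →
      (3 + 2 * Real.sqrt 2) / 8 ≤ clockH0 t ∧
        clockH1 t ≤ 1 / 8 ∧ clockH2 t ≤ (3 - 2 * Real.sqrt 2) / 8) ∧
    clockH0 (Real.log (1 + Real.sqrt 2)) = (3 + 2 * Real.sqrt 2) / 8 ∧
    clockH1 (Real.log (1 + Real.sqrt 2)) = 1 / 8 ∧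
    clockH2 (Real.log (1 + Real.sqrt 2)) = (3 - 2 * Real.sqrt 2) / 8 := by
  have hr2 : (Real.sqrt 2) ^ 2 = 2 := Real.sq_sqrt (by norm_num)
  have hr1 : 1 < Real.sqrt 2 := by
    nlinarith [Real.sqrt_nonneg 2, hr2]
  set r := Real.sqrt 2 with hr
  constructor
  · intro t ht
    set e := Real.exp t with he
    have he1 : 1 < e := Real.one_lt_exp_iff.mpr ht
    have he0 : 0 < e := lt_trans one_pos he1
    have hsinh : Real.sinh t = (e - e⁻¹) / 2 := by
      rw [Real.sinh_eq, Real.exp_neg]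
    have hs0 : 0 < Real.sinh t := Real.sinh_pos_iff.mpr ht
    set s := Real.sinh t with hsdef
    have hse : 2 * e * s = e ^ 2 - 1 := by
      rw [hsinh]
      field_simp
    have hd : 0 < 1 + s := by linarith
    -- key quadratic: (2-r) e² - 2r e + (2+r) = (2-r)(e-(1+r))² ≥ 0
    have hkey : (2 - r) * e ^ 2 - 2 * r * e + (2 + r) ≥ 0 := by
      nlinarith [sq_nonneg (e - (1 + r)), hr2, hr1]
    refine ⟨?_, ?_, ?_⟩
    · rw [clockH0, ← he, ← hsdef, le_div_iff₀ (by positivity)]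
      -- reduce to polynomial in e using 2 e s = e² - 1 ⇒ 2 e (1+s) = e²+2e-1
      have h1s : 2 * e * (1 + s) = e ^ 2 + 2 * e - 1 := by nlinarith
      have hA : (2 + r) * (e ^ 2 + 2 * e - 1) ≤ 4 * e * (e + 1) := by nlinarith
      have hB : 0 < e ^ 2 + 2 * e - 1 := by nlinarith
      have h0A : 0 ≤ (2 + r) * (e ^ 2 + 2 * e - 1) := by positivity
      have hsq : ((2 + r) * (e ^ 2 + 2 * e - 1)) ^ 2 ≤ (4 * e * (e + 1)) ^ 2 :=
        pow_le_pow_left₀ h0A hA 2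
      have hsq' : (3 + 2 * r) * (e ^ 2 + 2 * e - 1) ^ 2 ≤ 8 * e ^ 2 * (e + 1) ^ 2 := by
        nlinarith [hsq, hr2]
      have h2 : (3 + 2 * r) / 8 * (4 * (1 + s) ^ 2) * (4 * e ^ 2)
          ≤ (e + 1) ^ 2 * (4 * e ^ 2) := by
        have key : (3 + 2 * r) / 8 * (4 * (1 + s) ^ 2) * (4 * e ^ 2)
            = (3 + 2 * r) * (2 * e * (1 + s)) ^ 2 / 2 := by ring
        rw [key, h1s]
        linarith
      have he2 : 0 < 4 * e ^ 2 := by positivity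
      exact le_of_mul_le_mul_right h2 he2
    · rw [clockH1, ← hsdef, div_le_iff₀ (by positivity)]
      nlinarith [sq_nonneg (s - 1)]
    · rw [clockH2, ← hsdef, div_le_iff₀ (by positivity)]
      have hinv : Real.exp (-t) = e⁻¹ := by rw [Real.exp_neg]
      rw [hinv]
      have h1s : 2 * e * (1 + s) = e ^ 2 + 2 * e - 1 := by nlinarith
      have hA : 2 * r * (e - 1) ≤ (r - 1) * (e ^ 2 + 2 * e - 1) := by nlinarith
      have h0A : 0 ≤ 2 * r * (e - 1) := by nlinarith
      have hsq : (2 * r * (e - 1)) ^ 2 ≤ ((r - 1) * (e ^ 2 + 2 * e - 1)) ^ 2 :=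
        pow_le_pow_left₀ h0A hA 2
      have hsq' : 8 * (e - 1) ^ 2 ≤ (3 - 2 * r) * (e ^ 2 + 2 * e - 1) ^ 2 := by
        nlinarith [hsq, hr2]
      have hie : e⁻¹ - 1 = -(e - 1) / e := by field_simp; ring
      rw [hie]
      have he2 : 0 < 4 * e ^ 2 := by positivity
      have h3 : (-(e - 1) / e) ^ 2 * (4 * e ^ 2)
          ≤ (3 - 2 * r) / 8 * (4 * (1 + s) ^ 2) * (4 * e ^ 2) := by
        have h2 : (-(e - 1) / e) ^ 2 * (4 * e ^ 2) = 4 * (e - 1) ^ 2 := by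
          field_simp
        have key : (3 - 2 * r) / 8 * (4 * (1 + s) ^ 2) * (4 * e ^ 2)
            = (3 - 2 * r) * (2 * e * (1 + s)) ^ 2 / 2 := by ring
        rw [h2, key, h1s]
        linarith
      exact le_of_mul_le_mul_right h3 he2
  · have h1r : (0:ℝ) < 1 + r := by linarith
    have hexp : Real.exp (Real.log (1 + r)) = 1 + r := Real.exp_log h1r
    have hinv : (1 + r)⁻¹ = r - 1 :=
      inv_eq_of_mul_eq_one_right (by nlinarith [hr2])
    have hsinh : Real.sinh (Real.log (1 + r)) = 1 := by
      rw [Real.sinh_eq, Real.exp_neg, hexp, hinv]; ring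
    have hexpneg : Real.exp (-(Real.log (1 + r))) = r - 1 := by
      rw [Real.exp_neg, hexp, hinv]
    refine ⟨?_, ?_, ?_⟩
    · rw [clockH0, hexp, hsinh]
      nlinarith [hr2]
    · rw [clockH1, hsinh]; norm_num
    · rw [clockH2, hexpneg, hsinh]
      nlinarith [hr2]
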